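/- arXiv:1812.03029 — 3 statements merged into one kernel-verified Lean document; each statement's English description precedes it below -/
import Mathlib

section
/- Let μ be the smallest positive root of the equation J₀(x) = J₁(x). Then the function H(r) = r·(J₀(μr)² + J₁(μr)²) is strictly monotonically increasing on the interval (0,1). -/
open Real MeasureTheory intervalIntegral Metric

/-- Bessel function of the first kind of integer order `n`, via the
standard integral representation. -/
noncomputable def besselJ (n : ℕ) (x : ℝ) : ℝ :=
  (1 / π) * ∫ θ in (0:ℝ)..π, Real.cos (n * θ - x * Real.sin θ)

lemma besselJ_hasDerivAt (n : ℕ) (x : ℝ) :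
    HasDerivAt (besselJ n)
      ((1 / π) * ∫ θ in (0:ℝ)..π, Real.sin θ * Real.sin (n * θ - x * Real.sin θ)) x := by
  have key := intervalIntegral.hasDerivAt_integral_of_dominated_loc_of_deriv_le
    (𝕜 := ℝ) (μ := volume) (a := 0) (b := π)
    (F := fun (y : ℝ) (θ : ℝ) => Real.cos (n * θ - y * Real.sin θ))
    (F' := fun (y : ℝ) (θ : ℝ) => Real.sin θ * Real.sin (n * θ - y * Real.sin θ))
    (x₀ := x) (bound := fun _ => 1) (s := Metric.ball x 1) (Metric.ball_mem_nhds x one_pos) ?_ ?_ ?_ ?_ ?_ ?_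
  · exact key.2.const_mul (1 / π)
  · filter_upwards with y
    exact (Continuous.aestronglyMeasurable (by fun_prop)).restrict
  · exact (Continuous.intervalIntegrable (by fun_prop) 0 π)
  · exact (Continuous.aestronglyMeasurable (by fun_prop)).restrict
  · filter_upwards with θ _ y _
    rw [Real.norm_eq_abs, abs_mul]
    exact mul_le_one₀ (Real.abs_sin_le_one θ) (abs_nonneg _) (Real.abs_sin_le_one _)
  · exact intervalIntegrable_const
  · filter_upwards with θ _ y _
    have h1 : HasDerivAt (fun y : ℝ => y * Real.sin θ) (Real.sin θ) y :=
      hasDerivAt_mul_const _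
    have h2 : HasDerivAt (fun y : ℝ => (n : ℝ) * θ - y * Real.sin θ) (-Real.sin θ) y := by
      simpa using h1.const_sub ((n : ℝ) * θ)
    have h3 := (Real.hasDerivAt_cos ((n : ℝ) * θ - y * Real.sin θ)).comp y h2
    refine h3.congr_deriv ?_
    ring

lemma integral_cos_mul_cos (x : ℝ) (hx : x ≠ 0) :
    ∫ θ in (0:ℝ)..π, Real.cos θ * Real.cos (x * Real.sin θ) = 0 := by
  have hd : ∀ θ ∈ Set.uIcc (0:ℝ) π,
      HasDerivAt (fun θ => Real.sin (x * Real.sin θ) / x)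
        (Real.cos θ * Real.cos (x * Real.sin θ)) θ := by
    intro θ _
    have h1 : HasDerivAt (fun θ : ℝ => x * Real.sin θ) (x * Real.cos θ) θ :=
      (Real.hasDerivAt_sin θ).const_mul x
    have h2 := ((Real.hasDerivAt_sin (x * Real.sin θ)).comp θ h1).div_const x
    refine h2.congr_deriv ?_
    field_simp
  rw [intervalIntegral.integral_eq_sub_of_hasDerivAt hd
    ((Continuous.intervalIntegrable (by fun_prop) 0 π))]
  simp

lemma besselJ_one_eq (x : ℝ) (hx : x ≠ 0) :
    besselJ 1 x = (1 / π) * ∫ θ in (0:ℝ)..π, Real.sin θ * Real.sin (x * Real.sin θ) := by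
  unfold besselJ
  congr 1
  have hcongr : ∀ θ ∈ Set.uIcc (0:ℝ) π, Real.cos ((1:ℕ) * θ - x * Real.sin θ)
      = Real.cos θ * Real.cos (x * Real.sin θ) + Real.sin θ * Real.sin (x * Real.sin θ) := by
    intro θ _
    rw [Nat.cast_one, one_mul, Real.cos_sub]
  rw [intervalIntegral.integral_congr hcongr, intervalIntegral.integral_add
      (Continuous.intervalIntegrable (by fun_prop) 0 π)
      (Continuous.intervalIntegrable (by fun_prop) 0 π),
    integral_cos_mul_cos x hx, zero_add]

lemma besselJ_zero_hasDerivAt (x : ℝ) (hx : x ≠ 0) :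
    HasDerivAt (besselJ 0) (-(besselJ 1 x)) x := by
  have h := besselJ_hasDerivAt 0 x
  have heq : ∀ θ ∈ Set.uIcc (0:ℝ) π, Real.sin θ * Real.sin ((0:ℕ) * θ - x * Real.sin θ)
      = -(Real.sin θ * Real.sin (x * Real.sin θ)) := by
    intro θ _
    rw [Nat.cast_zero, zero_mul, zero_sub, Real.sin_neg]
    ring
  rw [intervalIntegral.integral_congr heq, intervalIntegral.integral_neg] at h
  convert h using 1
  rw [besselJ_one_eq x hx]
  ring

lemma integral_aux (x : ℝ) (hx : x ≠ 0) :
    ∫ θ in (0:ℝ)..π, (Real.cos θ - 1 / x) * Real.cos (θ - x * Real.sin θ) = 0 := by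
  have hd : ∀ θ ∈ Set.uIcc (0:ℝ) π,
      HasDerivAt (fun θ => -(Real.sin (θ - x * Real.sin θ)) / x)
        ((Real.cos θ - 1 / x) * Real.cos (θ - x * Real.sin θ)) θ := by
    intro θ _
    have h1 : HasDerivAt (fun θ : ℝ => θ - x * Real.sin θ) (1 - x * Real.cos θ) θ :=
      (hasDerivAt_id θ).sub ((Real.hasDerivAt_sin θ).const_mul x)
    have h2 := (((Real.hasDerivAt_sin (θ - x * Real.sin θ)).comp θ h1).neg).div_const x
    refine h2.congr_deriv ?_
    field_simp
    ring
  rw [intervalIntegral.integral_eq_sub_of_hasDerivAt hd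
    ((Continuous.intervalIntegrable (by fun_prop) 0 π))]
  simp

lemma besselJ_one_hasDerivAt (x : ℝ) (hx : x ≠ 0) :
    HasDerivAt (besselJ 1) (besselJ 0 x - besselJ 1 x / x) x := by
  have h := besselJ_hasDerivAt 1 x
  have heq : ∀ θ ∈ Set.uIcc (0:ℝ) π, Real.sin θ * Real.sin ((1:ℕ) * θ - x * Real.sin θ)
      = Real.cos ((0:ℕ) * θ - x * Real.sin θ)
        - ((Real.cos θ - 1 / x) * Real.cos (θ - x * Real.sin θ)
           + (1 / x) * Real.cos ((1:ℕ) * θ - x * Real.sin θ)) := by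
    intro θ _
    rw [Nat.cast_zero, Nat.cast_one, zero_mul, one_mul, zero_sub, Real.cos_neg]
    rw [show x * Real.sin θ = θ - (θ - x * Real.sin θ) by ring, Real.cos_sub]
    ring
  rw [intervalIntegral.integral_congr heq, intervalIntegral.integral_sub
      (Continuous.intervalIntegrable (by fun_prop) 0 π)
      (IntervalIntegrable.add
        (Continuous.intervalIntegrable (by fun_prop) 0 π)
        (Continuous.intervalIntegrable (by fun_prop) 0 π)),
    intervalIntegral.integral_add
      (Continuous.intervalIntegrable (by fun_prop) 0 π)
      (Continuous.intervalIntegrable (by fun_prop) 0 π),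
    integral_aux x hx, zero_add, intervalIntegral.integral_const_mul] at h
  convert h using 1
  unfold besselJ
  field_simp

lemma besselJ_continuous (n : ℕ) : Continuous (besselJ n) :=
  continuous_iff_continuousAt.2 fun x => (besselJ_hasDerivAt n x).continuousAt

lemma besselJ_zero_zero : besselJ 0 0 = 1 := by
  unfold besselJ
  have : ∀ θ ∈ Set.uIcc (0:ℝ) π, Real.cos ((0:ℕ) * θ - 0 * Real.sin θ) = 1 := by
    intro θ _; simp
  rw [intervalIntegral.integral_congr this]
  simp [Real.pi_ne_zero]

lemma besselJ_one_zero : besselJ 1 0 = 0 := by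
  unfold besselJ
  have : ∀ θ ∈ Set.uIcc (0:ℝ) π, Real.cos ((1:ℕ) * θ - 0 * Real.sin θ) = Real.cos θ := by
    intro θ _; simp
  rw [intervalIntegral.integral_congr this]
  simp

lemma besselJ_one_pos {x : ℝ} (h0 : 0 < x) (hπ : x < π) : 0 < besselJ 1 x := by
  rw [besselJ_one_eq x h0.ne']
  apply mul_pos (by positivity)
  apply intervalIntegral.intervalIntegral_pos_of_pos_on
    (Continuous.intervalIntegrable (by fun_prop) 0 π) _ Real.pi_pos
  intro θ hθ
  have hsθ : 0 < Real.sin θ := Real.sin_pos_of_pos_of_lt_pi hθ.1 hθ.2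
  have h1 : 0 < x * Real.sin θ := mul_pos h0 hsθ
  have h2 : x * Real.sin θ < π := by
    calc x * Real.sin θ ≤ x * 1 := by nlinarith [Real.sin_le_one θ]
    _ < π := by linarith
  exact mul_pos hsθ (Real.sin_pos_of_pos_of_lt_pi h1 h2)

theorem H_strictMono (μ : ℝ) (hμ : 0 < μ)
    (hroot : besselJ 0 μ = besselJ 1 μ)
    (hmin : ∀ x, 0 < x → x < μ → besselJ 0 x ≠ besselJ 1 x) :
    StrictMonoOn (fun r : ℝ => r * ((besselJ 0 (μ * r)) ^ 2 + (besselJ 1 (μ * r)) ^ 2))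
      (Set.Ioo 0 1) := by
  -- J₀ > J₁ on (0, μ)
  have hgt : ∀ x, 0 < x → x < μ → besselJ 1 x < besselJ 0 x := by
    intro s h0 hs
    by_contra hcon
    push_neg at hcon
    have hlt : besselJ 0 s < besselJ 1 s := lt_of_le_of_ne hcon (hmin s h0 hs)
    set f : ℝ → ℝ := fun x => besselJ 0 x - besselJ 1 x with hf
    have hfc : ContinuousOn f (Set.Icc 0 s) :=
      ((besselJ_continuous 0).sub (besselJ_continuous 1)).continuousOn
    have h0lt : (0:ℝ) ∈ Set.Ioo (f s) (f 0) := by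
      constructor
      · simp only [hf]; linarith
      · simp only [hf, besselJ_zero_zero, besselJ_one_zero]; norm_num
    obtain ⟨c, hc, hfc0⟩ := intermediate_value_Ioo' h0.le hfc h0lt
    exact hmin c hc.1 (hc.2.trans hs) (by simp only [hf] at hfc0; linarith)
  -- J₁ > 0 on (0, μ)
  have hpos1 : ∀ x, 0 < x → x < μ → 0 < besselJ 1 x := by
    intro s h0 hs
    by_contra hcon
    push_neg at hcon
    have hsπ : π ≤ s := by
      by_contra hh
      push_neg at hh
      exact absurd (besselJ_one_pos h0 hh) (not_lt.2 hcon)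
    have hπ2 : π / 2 < s := by linarith [Real.pi_pos]
    set A : Set ℝ := {x ∈ Set.Icc (π/2) s | besselJ 1 x ≤ 0} with hA
    have hAne : A.Nonempty := ⟨s, ⟨⟨by linarith, le_refl s⟩, hcon⟩⟩
    have hAbdd : BddBelow A := ⟨π/2, fun x hx => hx.1.1⟩
    have hAclosed : IsClosed A :=
      (isClosed_Icc.inter (isClosed_le (besselJ_continuous 1) continuous_const))
    set σ := sInf A with hσ
    have hσA : σ ∈ A := hAclosed.csInf_mem hAne hAbdd
    have hσlb : π/2 ≤ σ := le_csInf hAne fun x hx => hx.1.1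
    have hσub : σ ≤ s := csInf_le hAbdd ⟨⟨by linarith, le_refl s⟩, hcon⟩
    have hσpos : 0 < σ := lt_of_lt_of_le (by linarith [Real.pi_pos]) hσlb
    -- J₁ > 0 on (0, σ)
    have hposbelow : ∀ x, 0 < x → x < σ → 0 < besselJ 1 x := by
      intro x hx0 hxσ
      rcases lt_or_ge x (π/2) with h | h
      · exact besselJ_one_pos hx0 (by linarith [Real.pi_pos])
      · by_contra hc
        push_neg at hc
        have : x ∈ A := ⟨⟨h, by linarith⟩, hc⟩
        exact absurd (csInf_le hAbdd this) (not_le.2 hxσ)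
    -- J₁ σ = 0
    have hσ0 : besselJ 1 σ = 0 := by
      refine le_antisymm hσA.2 ?_
      have hπ2σ : π/2 < σ := by
        rcases lt_or_eq_of_le hσlb with h | h
        · exact h
        · exfalso
          have := besselJ_one_pos (x := π/2) (by positivity) (by linarith [Real.pi_pos])
          rw [h] at this
          linarith [hσA.2]
      have htd : Filter.Tendsto (besselJ 1) (nhdsWithin σ (Set.Iio σ)) (nhds (besselJ 1 σ)) :=
        ((besselJ_continuous 1).continuousAt).continuousWithinAt.tendsto
      refine ge_of_tendsto htd ?_
      filter_upwards [Ioo_mem_nhdsLT_of_mem ⟨hπ2σ, le_refl σ⟩] with x hx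
      exact (hposbelow x (by linarith [hx.1, Real.pi_pos]) hx.2).le
    -- derivative at σ is positive
    have hd : HasDerivAt (besselJ 1) (besselJ 0 σ - besselJ 1 σ / σ) σ :=
      besselJ_one_hasDerivAt σ hσpos.ne'
    have hdpos : 0 < besselJ 0 σ - besselJ 1 σ / σ := by
      have := hgt σ hσpos (lt_of_le_of_lt hσub hs)
      rw [hσ0] at this ⊢
      simpa using this
    -- but the left slope is nonpositive
    have hslope : Filter.Tendsto (slope (besselJ 1) σ) (nhdsWithin σ {σ}ᶜ)
        (nhds (besselJ 0 σ - besselJ 1 σ / σ)) := hasDerivAt_iff_tendsto_slope.1 hd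
    have hslope' : Filter.Tendsto (slope (besselJ 1) σ) (nhdsWithin σ (Set.Iio σ))
        (nhds (besselJ 0 σ - besselJ 1 σ / σ)) :=
      hslope.mono_left (nhdsWithin_mono σ (fun x hx => ne_of_lt hx))
    have hπ2σ : π/2 < σ := by
      rcases lt_or_eq_of_le hσlb with h | h
      · exact h
      · exfalso
        have := besselJ_one_pos (x := π/2) (by positivity) (by linarith [Real.pi_pos])
        rw [h] at this
        linarith [hσA.2]
    have hle : besselJ 0 σ - besselJ 1 σ / σ ≤ 0 := by
      refine le_of_tendsto hslope' ?_
      filter_upwards [Ioo_mem_nhdsLT_of_mem ⟨hπ2σ, le_refl σ⟩] with x hx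
      rw [slope_def_field]
      have h1 : 0 < besselJ 1 x := hposbelow x (by linarith [Real.pi_pos, hx.1]) hx.2
      rw [hσ0]
      apply div_nonpos_of_nonneg_of_nonpos (by linarith) (by linarith [hx.2])
    linarith
  -- derivative of H
  have key : ∀ r ∈ Set.Ioo (0:ℝ) 1,
      HasDerivAt (fun r : ℝ => r * ((besselJ 0 (μ * r)) ^ 2 + (besselJ 1 (μ * r)) ^ 2))
        ((besselJ 0 (μ * r)) ^ 2 - (besselJ 1 (μ * r)) ^ 2) r := by
    intro r hr
    have hs0 : μ * r ≠ 0 := (mul_pos hμ hr.1).ne'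
    have hin : HasDerivAt (fun r : ℝ => μ * r) μ r := by
      simpa using (hasDerivAt_id r).const_mul μ
    have h0 : HasDerivAt (fun r : ℝ => besselJ 0 (μ * r)) (-(besselJ 1 (μ * r)) * μ) r :=
      (besselJ_zero_hasDerivAt (μ * r) hs0).comp r hin
    have h1 : HasDerivAt (fun r : ℝ => besselJ 1 (μ * r))
        ((besselJ 0 (μ * r) - besselJ 1 (μ * r) / (μ * r)) * μ) r :=
      (besselJ_one_hasDerivAt (μ * r) hs0).comp r hin
    have hsum := (h0.pow 2).add (h1.pow 2)
    have hH := (hasDerivAt_id r).mul hsum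
    refine hH.congr_deriv ?_
    have hr0 : r ≠ 0 := hr.1.ne'
    simp only [Pi.add_apply, Pi.pow_apply, id]
    field_simp
    ring
  apply strictMonoOn_of_deriv_pos (convex_Ioo 0 1)
  · exact fun r hr => (key r hr).continuousAt.continuousWithinAt
  · intro r hr
    rw [interior_Ioo] at hr
    rw [(key r hr).deriv]
    have hs1 : 0 < μ * r := mul_pos hμ hr.1
    have hs2 : μ * r < μ := by nlinarith [hr.2]
    have hj1 := hpos1 (μ * r) hs1 hs2
    have hj01 := hgt (μ * r) hs1 hs2
    nlinarith
end

section
/- Let k ≥ 1 be a natural number and let u : (0,1) → ℂ be continuously differentiable with u(0⁺) = 0 and u, u', u/r ∈ L²((0,1); r dr). Then ∫₀¹ |u'(r) + ((k+1)/r)u(r)|² r dr ≥ ∫₀¹ |u'(r) + (1/r)u(r)|² r dr + k|u(1)|². -/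
open MeasureTheory Set

lemma pointwise_id (k : ℝ) (a b : ℂ) (r : ℝ) (hr : 0 < r) :
    ‖a + (((k:ℂ)+1)/(r:ℂ)) * b‖^2 * r
      = ‖a + (1/(r:ℂ)) * b‖^2 * r + k * (2*((starRingEnd ℂ) b * a).re)
        + (2*k + k^2) * (‖b‖^2 / r) := by
  have hr0 : r ≠ 0 := hr.ne'
  have h1 : ((k:ℂ)+1)/(r:ℂ) = (((k+1)/r : ℝ) : ℂ) := by push_cast; ring
  have h2 : (1:ℂ)/(r:ℂ) = (((1/r : ℝ)) : ℂ) := by push_cast; ring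
  rw [h1, h2]
  simp only [Complex.sq_norm, Complex.normSq_apply, Complex.add_re,
    Complex.add_im, Complex.mul_re, Complex.mul_im, Complex.ofReal_re, Complex.ofReal_im,
    Complex.conj_re, Complex.conj_im]
  field_simp
  ring

lemma hasDerivAt_norm_sq {u : ℝ → ℂ} {a : ℂ} {r : ℝ} (h : HasDerivAt u a r) :
    HasDerivAt (fun x => ‖u x‖^2) (2*((starRingEnd ℂ) (u r) * a).re) r := by
  have hre : HasDerivAt (fun x => (u x).re) a.re r :=
    (Complex.reCLM.hasFDerivAt.comp_hasDerivAt r h)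
  have him : HasDerivAt (fun x => (u x).im) a.im r :=
    (Complex.imCLM.hasFDerivAt.comp_hasDerivAt r h)
  have key := (hre.mul hre).add (him.mul him)
  have hfun : (fun x => ‖u x‖^2) = fun x => (u x).re*(u x).re + (u x).im*(u x).im := by
    funext x
    rw [Complex.sq_norm, Complex.normSq_apply]
  rw [hfun]
  refine key.congr_deriv ?_
  rw [Complex.mul_re, Complex.conj_re, Complex.conj_im]
  ring

theorem hardy_type_lower_bound' (k : ℕ) (hk : 1 ≤ k) (u : ℝ → ℂ)
    (hreg : ContDiffOn ℝ 1 u (Ioc 0 1))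
    (h0 : Filter.Tendsto u (nhdsWithin 0 (Set.Ioi 0)) (nhds 0))
    (hL2 : IntegrableOn (fun r => ‖u r‖ ^ 2 * r) (Ioo 0 1))
    (hL2' : IntegrableOn (fun r => ‖deriv u r‖ ^ 2 * r) (Ioo 0 1))
    (hL2q : IntegrableOn (fun r => ‖u r / r‖ ^ 2 * r) (Ioo 0 1)) :
    ∫ r in (0:ℝ)..1, ‖deriv u r + ((k + 1 : ℕ) / r : ℂ) * u r‖ ^ 2 * r
      ≥ (∫ r in (0:ℝ)..1, ‖deriv u r + (1 / r : ℂ) * u r‖ ^ 2 * r) + k * ‖u 1‖ ^ 2 := by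
  have hsm : MeasurableSet (Ioo (0:ℝ) 1) := measurableSet_Ioo
  -- derivatives at interior points
  have hderiv : ∀ r ∈ Ioo (0:ℝ) 1, HasDerivAt u (deriv u r) r := by
    intro r hr
    have hnb : Ioc (0:ℝ) 1 ∈ nhds r :=
      mem_nhds_iff.2 ⟨Ioo 0 1, Ioo_subset_Ioc_self, isOpen_Ioo, hr⟩
    exact ((hreg.differentiableOn one_ne_zero).differentiableAt hnb).hasDerivAt
  have hcu : ContinuousOn u (Ioo (0:ℝ) 1) := hreg.continuousOn.mono Ioo_subset_Ioc_self
  have hcu' : ContinuousOn (deriv u) (Ioo (0:ℝ) 1) := by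
    have h1 : ContinuousOn (derivWithin u (Ioc 0 1)) (Ioc (0:ℝ) 1) :=
      hreg.continuousOn_derivWithin (uniqueDiffOn_Ioc 0 1) le_rfl
    refine (h1.mono Ioo_subset_Ioc_self).congr ?_
    intro r hr
    have hnb : Ioc (0:ℝ) 1 ∈ nhds r :=
      mem_nhds_iff.2 ⟨Ioo 0 1, Ioo_subset_Ioc_self, isOpen_Ioo, hr⟩
    exact (derivWithin_of_mem_nhds hnb).symm
  -- integrability of |u|^2 / r
  have hq : IntegrableOn (fun r => ‖u r‖^2 / r) (Ioo (0:ℝ) 1) := by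
    refine hL2q.congr_fun ?_ hsm
    intro r hr
    have hr0 : (0:ℝ) < r := hr.1
    have hnorm : ‖u r / (r:ℂ)‖ = ‖u r‖ / r := by
      rw [norm_div, Complex.norm_real, Real.norm_eq_abs, abs_of_pos hr0]
    show ‖u r / (r:ℂ)‖ ^ 2 * r = ‖u r‖ ^ 2 / r
    rw [hnorm]
    field_simp
  -- integrability of the derivative of |u|^2
  have hF'int : IntegrableOn (fun r => 2*((starRingEnd ℂ) (u r) * deriv u r).re)
      (Ioo (0:ℝ) 1) := by
    refine Integrable.mono' (hL2'.add hq) ?_ ?_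
    · refine (ContinuousOn.aestronglyMeasurable ?_ hsm)
      exact continuousOn_const.mul
        (Complex.continuous_re.comp_continuousOn
          ((RCLike.continuous_conj.comp_continuousOn hcu).mul hcu'))
    · rw [ae_restrict_iff' hsm]
      refine Filter.Eventually.of_forall fun r hr => ?_
      have hr0 : (0:ℝ) < r := hr.1
      set A := ‖deriv u r‖ with hA
      set B := ‖u r‖ with hB
      have hbound : |((starRingEnd ℂ) (u r) * deriv u r).re|
          ≤ B * A := by
        calc |((starRingEnd ℂ) (u r) * deriv u r).re|
            ≤ ‖(starRingEnd ℂ) (u r) * deriv u r‖ :=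
              Complex.abs_re_le_norm _
          _ = B * A := by
              rw [norm_mul, Complex.norm_conj]
      have hAB : 2*(B*A) ≤ A^2*r + B^2/r := by
        have key : 2*(B*A)*r ≤ (A^2*r + B^2/r)*r := by
          have h1 : (A^2*r + B^2/r)*r = A^2*r^2 + B^2 := by field_simp
          rw [h1]
          nlinarith [sq_nonneg (A*r - B)]
        exact le_of_mul_le_mul_right key hr0
      calc ‖2*((starRingEnd ℂ) (u r) * deriv u r).re‖
          = 2*|((starRingEnd ℂ) (u r) * deriv u r).re| := by
            rw [Real.norm_eq_abs, abs_mul, abs_two]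
        _ ≤ 2*(B*A) := by linarith [hbound]
        _ ≤ A^2*r + B^2/r := hAB
        _ = ‖deriv u r‖^2*r + ‖u r‖^2/r := rfl
  -- continuity of coefficient functions
  have hcoef : ∀ (c : ℂ), ContinuousOn (fun r : ℝ => c/(r:ℂ)) (Ioo (0:ℝ) 1) := by
    intro c
    exact continuousOn_const.div (Complex.continuous_ofReal.continuousOn)
      (fun r hr => Complex.ofReal_ne_zero.2 hr.1.ne')
  -- generic integrability of the weighted squares
  have hgen : ∀ (c : ℂ), IntegrableOn
      (fun r => ‖deriv u r + (c/(r:ℂ)) * u r‖^2 * r) (Ioo (0:ℝ) 1) := by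
    intro c
    refine Integrable.mono' ((hL2'.const_mul 2).add (hq.const_mul (2*‖c‖^2))) ?_ ?_
    · refine (ContinuousOn.aestronglyMeasurable ?_ hsm)
      exact (((hcu'.add ((hcoef c).mul hcu)).norm.pow 2).mul continuousOn_id)
    · rw [ae_restrict_iff' hsm]
      refine Filter.Eventually.of_forall fun r hr => ?_
      have hr0 : (0:ℝ) < r := hr.1
      set A := ‖deriv u r‖ with hA
      set B := ‖u r‖ with hB
      have hcnorm : ‖(c/(r:ℂ)) * u r‖ = ‖c‖/r*B := by
        rw [norm_mul, norm_div, Complex.norm_real, Real.norm_eq_abs, abs_of_pos hr0]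
      have hz : ‖deriv u r + (c/(r:ℂ)) * u r‖ ≤ A + ‖c‖/r*B := by
        calc ‖deriv u r + (c/(r:ℂ)) * u r‖ ≤ A + ‖(c/(r:ℂ)) * u r‖ := norm_add_le _ _
          _ = A + ‖c‖/r*B := by rw [hcnorm]
      have h2 : ‖deriv u r + (c/(r:ℂ)) * u r‖^2 ≤ 2*A^2 + 2*(‖c‖/r)^2*B^2 := by
        nlinarith [hz, sq_nonneg (A - ‖c‖/r*B), norm_nonneg (deriv u r + (c/(r:ℂ)) * u r),
          norm_nonneg (deriv u r), norm_nonneg (u r),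
          mul_nonneg (div_nonneg (norm_nonneg c) hr0.le) (norm_nonneg (u r))]
      have h3 : 2*(‖c‖/r)^2*B^2*r = 2*‖c‖^2*(B^2/r) := by
        field_simp
      have hnn : (0:ℝ) ≤ ‖deriv u r + (c/(r:ℂ)) * u r‖^2 * r := by positivity
      rw [Real.norm_eq_abs, abs_of_nonneg hnn]
      calc ‖deriv u r + (c/(r:ℂ)) * u r‖^2 * r ≤ (2*A^2 + 2*(‖c‖/r)^2*B^2)*r := by
            exact mul_le_mul_of_nonneg_right h2 hr0.le
        _ = 2*(A^2*r) + 2*‖c‖^2*(B^2/r) := by rw [add_mul]; rw [mul_assoc 2 (A^2) r] at *; linarith [h3]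
        _ = 2 * (‖deriv u r‖ ^ 2 * r) + 2 * ‖c‖ ^ 2 * (‖u r‖ ^ 2 / r) := rfl
  have hP : IntegrableOn
      (fun r => ‖deriv u r + ((k + 1 : ℕ) / r : ℂ) * u r‖ ^ 2 * r) (Ioo (0:ℝ) 1) :=
    hgen ((k + 1 : ℕ) : ℂ)
  have hQ : IntegrableOn
      (fun r => ‖deriv u r + (1 / r : ℂ) * u r‖ ^ 2 * r) (Ioo (0:ℝ) 1) :=
    hgen 1
  -- the FTC step: ∫ (|u|²)' = ‖u 1‖²
  have hFTC : (∫ r in Ioo (0:ℝ) 1, 2*((starRingEnd ℂ) (u r) * deriv u r).re)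
      = ‖u 1‖^2 := by
    set F' : ℝ → ℝ := fun r => 2*((starRingEnd ℂ) (u r) * deriv u r).re with hF'
    set a : ℕ → ℝ := fun n => 1/((n:ℝ)+1) with ha
    have ha_pos : ∀ n, 0 < a n := fun n => by positivity
    have ha_le : ∀ n, a n ≤ 1 := fun n => by
      rw [ha]
      rw [div_le_one (by positivity)]
      simp
    have hsub : ∀ n, Ioo (a n) 1 ⊆ Ioo (0:ℝ) 1 :=
      fun n => Ioo_subset_Ioo (ha_pos n).le le_rfl
    have hseg : ∀ n, (∫ r in Ioo (a n) 1, F' r) = ‖u 1‖^2 - ‖u (a n)‖^2 := by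
      intro n
      have hIcc : Icc (a n) 1 ⊆ Ioc (0:ℝ) 1 := fun x hx => ⟨lt_of_lt_of_le (ha_pos n) hx.1, hx.2⟩
      have hcontF : ContinuousOn (fun r => ‖u r‖^2) (Icc (a n) 1) :=
        ((hreg.continuousOn.mono hIcc).norm.pow 2)
      have hint : IntervalIntegrable F' volume (a n) 1 := by
        rw [intervalIntegrable_iff_integrableOn_Ioo_of_le (ha_le n)]
        exact hF'int.mono_set (hsub n)
      have := intervalIntegral.integral_eq_sub_of_hasDerivAt_of_le (ha_le n) hcontF
        (fun x hx => hasDerivAt_norm_sq (hderiv x (hsub n hx))) hint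
      rwa [intervalIntegral.integral_of_le (ha_le n), integral_Ioc_eq_integral_Ioo] at this
    have hmono : Monotone (fun n => Ioo (a n) 1) := by
      intro m n hmn
      refine Ioo_subset_Ioo ?_ le_rfl
      apply one_div_le_one_div_of_le (by positivity)
      exact add_le_add_left (Nat.cast_le.2 hmn) 1
    have hUnion : (⋃ n, Ioo (a n) 1) = Ioo (0:ℝ) 1 := by
      refine Subset.antisymm (iUnion_subset hsub) ?_
      intro x hx
      obtain ⟨n, hn⟩ := exists_nat_one_div_lt hx.1
      exact mem_iUnion.2 ⟨n, ⟨hn, hx.2⟩⟩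
    have h1 : Filter.Tendsto (fun n => ∫ r in Ioo (a n) 1, F' r) Filter.atTop
        (nhds (∫ r in Ioo (0:ℝ) 1, F' r)) := by
      have := tendsto_setIntegral_of_monotone (fun n => measurableSet_Ioo) hmono
        (by rw [hUnion]; exact hF'int)
      rwa [hUnion] at this
    have h2 : Filter.Tendsto (fun n => ‖u 1‖^2 - ‖u (a n)‖^2) Filter.atTop
        (nhds (‖u 1‖^2 - 0)) := by
      refine Filter.Tendsto.const_sub _ ?_
      have ha0 : Filter.Tendsto a Filter.atTop (nhdsWithin 0 (Set.Ioi 0)) := by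
        refine tendsto_nhdsWithin_of_tendsto_nhds_of_eventually_within _
          tendsto_one_div_add_atTop_nhds_zero_nat
          (Filter.Eventually.of_forall fun n => ha_pos n)
      have hc := (h0.comp ha0).norm.pow 2
      simpa using hc
    have h1' : Filter.Tendsto (fun n => ‖u 1‖^2 - ‖u (a n)‖^2) Filter.atTop
        (nhds (∫ r in Ioo (0:ℝ) 1, F' r)) := by
      refine h1.congr fun n => hseg n
    have := tendsto_nhds_unique h1' h2
    rw [sub_zero] at this
    exact this
  -- pointwise identity
  have hid : EqOn (fun r => ‖deriv u r + ((k + 1 : ℕ) / r : ℂ) * u r‖ ^ 2 * r)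
      (fun r => ‖deriv u r + (1 / r : ℂ) * u r‖ ^ 2 * r
        + ((k:ℝ) * (2*((starRingEnd ℂ) (u r) * deriv u r).re)
          + (2*(k:ℝ) + (k:ℝ)^2) * (‖u r‖^2 / r))) (Ioo (0:ℝ) 1) := by
    intro r hr
    have := pointwise_id (k:ℝ) (deriv u r) (u r) r hr.1
    have hcast : (((k:ℝ):ℂ)+1) = ((k + 1 : ℕ) : ℂ) := by push_cast; ring
    rw [hcast] at this
    simp only
    rw [this]
    ring
  -- assemble
  rw [ge_iff_le, intervalIntegral.integral_of_le (zero_le_one),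
    intervalIntegral.integral_of_le (zero_le_one),
    integral_Ioc_eq_integral_Ioo, integral_Ioc_eq_integral_Ioo]
  rw [setIntegral_congr_fun hsm hid]
  have hsumA : IntegrableOn
      (fun r => (k:ℝ) * (2*((starRingEnd ℂ) (u r) * deriv u r).re)) (Ioo (0:ℝ) 1) :=
    hF'int.const_mul (k:ℝ)
  have hsumB : IntegrableOn
      (fun r => (2*(k:ℝ) + (k:ℝ)^2) * (‖u r‖^2 / r)) (Ioo (0:ℝ) 1) :=
    hq.const_mul (2*(k:ℝ) + (k:ℝ)^2)
  have hsum2 : IntegrableOn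
      (fun r => (k:ℝ) * (2*((starRingEnd ℂ) (u r) * deriv u r).re)
        + (2*(k:ℝ) + (k:ℝ)^2) * (‖u r‖^2 / r)) (Ioo (0:ℝ) 1) := hsumA.add hsumB
  have hkint : (∫ r in Ioo (0:ℝ) 1, (k:ℝ) * (2*((starRingEnd ℂ) (u r) * deriv u r).re))
      = (k:ℝ) * ‖u 1‖^2 := by
    rw [integral_const_mul, hFTC]
  rw [integral_add hQ hsum2, integral_add hsumA hsumB, hkint]
  have hnonneg : 0 ≤ ∫ r in Ioo (0:ℝ) 1, (2*(k:ℝ) + (k:ℝ)^2) * (‖u r‖^2 / r) :=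
    setIntegral_nonneg hsm (fun r hr => mul_nonneg (by positivity) (div_nonneg (by positivity) hr.1.le))
  linarith
end

section
/- Let r₁, r₂, r_c be positive reals with r₁ ≤ r₂ and define G(r₁, r₂) = ((A + πr₁²)/(2π))^{1/2} · exp(2(r_c − r₂)·Φ(r₁, r_c)) for a fixed constant A > 0, where Φ(x,y) = (ln x − ln y)/(x−y) for x ≠ y and Φ(x,x)=1/x. Then G is nondecreasing in r₁ and nonincreasing in r₂. -/
open Real

/-- The logarithmic-mean-type function `Φ`. -/
noncomputable def Phi (x y : ℝ) : ℝ :=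
  if x = y then 1 / x else (Real.log x - Real.log y) / (x - y)

/-- The geometric functional `G(r₁,r₂)`. -/
noncomputable def Gfun (A rc r1 r2 : ℝ) : ℝ :=
  Real.sqrt ((A + π * r1 ^ 2) / (2 * π)) * Real.exp (2 * (rc - r2) * Phi r1 rc)

lemma phi_pos {x rc : ℝ} (hx : 0 < x) (hrc : 0 < rc) : 0 < Phi x rc := by
  unfold Phi
  split_ifs with h
  · positivity
  · rcases lt_or_gt_of_ne h with h' | h'
    · apply div_pos_of_neg_of_neg
      · simpa using Real.log_lt_log hx h'
      · linarith
    · apply div_pos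
      · simpa using Real.log_lt_log hrc h'
      · linarith

lemma log_sub_log_le {a rc : ℝ} (ha : 0 < a) (hrc : 0 < rc) :
    Real.log a - Real.log rc ≤ (a - rc) / rc := by
  have h := Real.log_le_sub_one_of_pos (show (0:ℝ) < a / rc by positivity)
  rw [Real.log_div (ne_of_gt ha) (ne_of_gt hrc)] at h
  have : a / rc - 1 = (a - rc) / rc := by field_simp
  linarith [this ▸ h]

lemma phi_anti {a b rc : ℝ} (ha : 0 < a) (hab : a ≤ b) (hrc : 0 < rc) :
    Phi b rc ≤ Phi a rc := by
  rcases eq_or_lt_of_le hab with rfl | hab'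
  · exact le_refl _
  have hb : 0 < b := lt_trans ha hab'
  unfold Phi
  split_ifs with h1 h2 h2
  · exfalso; rw [h1] at hab'; rw [h2] at hab'; exact lt_irrefl rc hab'
  · -- b = rc, a < rc : show 1/rc ≤ (log a - log rc)/(a - rc)
    subst h1
    have hlog := log_sub_log_le ha hb
    have heq : (Real.log a - Real.log b) / (a - b) = (Real.log b - Real.log a) / (b - a) := by
      rw [← neg_div_neg_eq]; ring_nf
    rw [heq, div_le_div_iff₀ hb (show (0:ℝ) < b - a by linarith)]
    have key : (a - b) / b * b ≥ (Real.log a - Real.log b) * b :=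
      mul_le_mul_of_nonneg_right hlog (le_of_lt hb)
    have hb' : b ≠ 0 := ne_of_gt hb
    have : (a - b) / b * b = a - b := by field_simp
    nlinarith [key]
  · -- a = rc, b > rc : show (log b - log rc)/(b - rc) ≤ 1/rc
    subst h2
    have hbrc : 0 < b - a := by linarith
    have hlog := log_sub_log_le hb ha
    rw [div_le_div_iff₀ hbrc ha]
    have key : (Real.log b - Real.log a) * a ≤ (b - a) / a * a :=
      mul_le_mul_of_nonneg_right hlog (le_of_lt ha)
    have ha' : a ≠ 0 := ne_of_gt ha
    have : (b - a) / a * a = b - a := by field_simp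
    linarith [key, this ▸ key]
  · -- a ≠ rc, b ≠ rc
    exact le_of_lt (strictConcaveOn_log_Ioi.secant_strict_mono
      (Set.mem_Ioi.mpr hrc) (Set.mem_Ioi.mpr ha) (Set.mem_Ioi.mpr hb) h2 h1 hab')

theorem G_monotone (A rc : ℝ) (hA : 0 < A) (hrc : 0 < rc) :
    (∀ r1 r1' r2 : ℝ, 0 < r1 → r1 ≤ r1' → r1' ≤ r2 → rc < r2 →
        Gfun A rc r1 r2 ≤ Gfun A rc r1' r2) ∧
    (∀ r1 r2 r2' : ℝ, 0 < r1 → r1 ≤ r2 → r2 ≤ r2' → rc < r2 →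
        Gfun A rc r1 r2' ≤ Gfun A rc r1 r2) := by
  constructor
  · intro r1 r1' r2 h1 h12 h23 hr2
    unfold Gfun
    have hsqrt : Real.sqrt ((A + π * r1 ^ 2) / (2 * π)) ≤
        Real.sqrt ((A + π * r1' ^ 2) / (2 * π)) := by
      apply Real.sqrt_le_sqrt
      have hsq : r1 ^ 2 ≤ r1' ^ 2 := by nlinarith
      have : A + π * r1 ^ 2 ≤ A + π * r1' ^ 2 := by nlinarith [Real.pi_pos]
      exact div_le_div_of_nonneg_right this (by positivity)
    have hexp : Real.exp (2 * (rc - r2) * Phi r1 rc) ≤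
        Real.exp (2 * (rc - r2) * Phi r1' rc) := by
      apply Real.exp_le_exp.mpr
      have hphi := phi_anti h1 h12 hrc
      have hneg : 2 * (rc - r2) ≤ 0 := by linarith
      exact mul_le_mul_of_nonpos_left hphi hneg
    exact mul_le_mul hsqrt hexp (le_of_lt (Real.exp_pos _)) (Real.sqrt_nonneg _)
  · intro r1 r2 r2' h1 h12 h22 hr2
    unfold Gfun
    apply mul_le_mul_of_nonneg_left _ (Real.sqrt_nonneg _)
    apply Real.exp_le_exp.mpr
    have hphi := phi_pos h1 hrc
    have : rc - r2' ≤ rc - r2 := by linarith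
    nlinarith
end
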